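/- Let F : EuclideanSpace ℝ (Fin d) → ℝ be differentiable with ∇F L-Lipschitz, i.e., ‖∇F(x) − ∇F(y)‖ ≤ L·‖x − y‖ for all x, y. Let γ ≥ 1, η ≥ 0, s ≥ 0, and let w, g₀, u₀, u ∈ EuclideanSpace ℝ (Fin d) with w' = w − η·g₀. Suppose ‖u₀ − ∇F(w)‖ ≤ s and ‖u − ∇F(w')‖ ≤ s, and let g̃ = (1/|T|)·Σ_{i∈T} g_i be the average of a nonempty finite family of vectors each satisfying the selection rule with parameter γ relative to u₀ and u, i.e., |[g_i]_j − [u₀]_j| ≤ γ·|[u]_j − [u₀]_j| for every coordinate j. Then ‖g̃ − ∇F(w')‖ ≤ (3 + 2γ)·s + (1+γ)·L·η·‖g₀‖. -/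

import Mathlib

lemma coord_norm_le {d : ℕ} (a b : EuclideanSpace ℝ (Fin d)) (c : ℝ) (hc : 0 ≤ c)
    (h : ∀ j, |a j| ≤ c * |b j|) : ‖a‖ ≤ c * ‖b‖ := by
  rw [EuclideanSpace.norm_eq, EuclideanSpace.norm_eq, ← Real.sqrt_sq hc, ← Real.sqrt_mul (sq_nonneg c)]
  apply Real.sqrt_le_sqrt
  rw [Finset.mul_sum]
  apply Finset.sum_le_sum
  intro j _
  have := h j
  simp only [Real.norm_eq_abs]
  nlinarith [abs_nonneg (a j), abs_nonneg (b j)]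

/-- Central deviation estimate in the proof of Theorem 1 (Byzantine resilience) of
the LICM-SGD paper: if the coordinate-wise medians `u₀, u` at two consecutive SGD
iterates are each within `s` of the corresponding true gradients, then the
screened-and-averaged aggregate `g̃` is within `(3+2γ)s + (1+γ)Lη‖g₀‖` of the true
gradient at the new iterate. -/
theorem licm_aggregate_deviation_bound
    {ι : Type*} (d : ℕ) (F : EuclideanSpace ℝ (Fin d) → ℝ) (L : ℝ)
    (hF : Differentiable ℝ F)
    (hLip : ∀ x y : EuclideanSpace ℝ (Fin d),
      ‖gradient F x - gradient F y‖ ≤ L * ‖x - y‖)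
    (γ η s : ℝ) (hγ : 1 ≤ γ) (hη : 0 ≤ η) (hs : 0 ≤ s)
    (w g₀ u₀ u : EuclideanSpace ℝ (Fin d))
    (w' : EuclideanSpace ℝ (Fin d)) (hw' : w' = w - η • g₀)
    (hu₀ : ‖u₀ - gradient F w‖ ≤ s)
    (hu : ‖u - gradient F w'‖ ≤ s)
    (T : Finset ι) (hT : T.Nonempty) (g : ι → EuclideanSpace ℝ (Fin d))
    (hsel : ∀ i ∈ T, ∀ j : Fin d, |g i j - u₀ j| ≤ γ * |u j - u₀ j|)
    (gt : EuclideanSpace ℝ (Fin d))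
    (hgt : gt = (T.card : ℝ)⁻¹ • ∑ i ∈ T, g i) :
    ‖gt - gradient F w'‖ ≤ (3 + 2 * γ) * s + (1 + γ) * L * η * ‖g₀‖ := by
  set Gw := gradient F w
  set Gw' := gradient F w'
  have hD : ‖Gw' - Gw‖ ≤ L * η * ‖g₀‖ := by
    have := hLip w' w
    have hn : ‖w' - w‖ = η * ‖g₀‖ := by
      rw [hw']
      simp [norm_smul, abs_of_nonneg hη]
    rw [hn] at this
    linarith [this]
  have hD0 : 0 ≤ L * η * ‖g₀‖ := le_trans (norm_nonneg _) hD
  set D := L * η * ‖g₀‖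
  -- bound ‖u - u₀‖
  have huu : ‖u - u₀‖ ≤ s + D + s := by
    have h1 : ‖u - u₀‖ ≤ ‖u - Gw'‖ + ‖Gw' - Gw‖ + ‖Gw - u₀‖ := by
      have := norm_sub_le_norm_sub_add_norm_sub u Gw' u₀
      have := norm_sub_le_norm_sub_add_norm_sub Gw' Gw u₀
      linarith
    have h2 : ‖Gw - u₀‖ = ‖u₀ - Gw‖ := norm_sub_rev _ _
    linarith
  have hu₀' : ‖u₀ - Gw'‖ ≤ s + D := by
    have h1 := norm_sub_le_norm_sub_add_norm_sub u₀ Gw Gw'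
    have h2 : ‖Gw - Gw'‖ = ‖Gw' - Gw‖ := norm_sub_rev _ _
    linarith
  have hγ0 : (0:ℝ) ≤ γ := by linarith
  have key : ∀ i ∈ T, ‖g i - Gw'‖ ≤ (3 + 2 * γ) * s + (1 + γ) * D := by
    intro i hi
    have h1 : ‖g i - u₀‖ ≤ γ * ‖u - u₀‖ := by
      apply coord_norm_le _ _ _ hγ0
      intro j
      simpa using hsel i hi j
    have h2 := norm_sub_le_norm_sub_add_norm_sub (g i) u₀ Gw'
    nlinarith [norm_nonneg (u - u₀)]
  have hc0 : (0:ℝ) < T.card := by exact_mod_cast Finset.card_pos.mpr hT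
  have heq : gt - Gw' = (T.card : ℝ)⁻¹ • ∑ i ∈ T, (g i - Gw') := by
    rw [hgt, Finset.sum_sub_distrib, smul_sub, Finset.sum_const]
    congr 1
    rw [← Nat.cast_smul_eq_nsmul ℝ, smul_smul, inv_mul_cancel₀ (ne_of_gt hc0), one_smul]
  rw [heq]
  rw [norm_smul]
  have hb : ‖∑ i ∈ T, (g i - Gw')‖ ≤ T.card * ((3 + 2 * γ) * s + (1 + γ) * D) := by
    calc ‖∑ i ∈ T, (g i - Gw')‖ ≤ ∑ i ∈ T, ‖g i - Gw'‖ := norm_sum_le _ _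
      _ ≤ ∑ _i ∈ T, ((3 + 2 * γ) * s + (1 + γ) * D) := Finset.sum_le_sum key
      _ = T.card * ((3 + 2 * γ) * s + (1 + γ) * D) := by
          rw [Finset.sum_const, nsmul_eq_mul]
  have : ‖((T.card:ℝ)⁻¹)‖ = (T.card:ℝ)⁻¹ := by
    rw [Real.norm_eq_abs, abs_of_nonneg (by positivity)]
  rw [this]
  calc (T.card:ℝ)⁻¹ * ‖∑ i ∈ T, (g i - Gw')‖
      ≤ (T.card:ℝ)⁻¹ * (T.card * ((3 + 2 * γ) * s + (1 + γ) * D)) := by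
        apply mul_le_mul_of_nonneg_left hb (by positivity)
    _ = (3 + 2 * γ) * s + (1 + γ) * D := by
        field_simp
    _ ≤ (3 + 2 * γ) * s + (1 + γ) * L * η * ‖g₀‖ := by
        simp only [D]; ring_nf; linarith
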